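/- Let (s_k)_{k≥0} be a nonincreasing sequence of positive reals, (a_k) a sequence in ℝ^n with a_k → a_∞, and suppose for all k: (s_k/2)‖a_k − a_∞‖² + D ≥ L^{k+1} + (s_{k+1}/2)‖a_{k+1} − a_∞‖², where D ∈ ℝ and (L^k) is a nonincreasing real sequence. Then for all K ≥ 1, L^K ≤ D + (s_0/(2K))‖a_0 − a_∞‖². -/
import Mathlib


open Filter

theorem stmt_17 {n : ℕ} (s : ℕ → ℝ) (hspos : ∀ k, 0 < s k) (hsmono : Antitone s)
    (a : ℕ → EuclideanSpace ℝ (Fin n)) (ainf : EuclideanSpace ℝ (Fin n))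
    (ha : Tendsto a atTop (nhds ainf))
    (D : ℝ) (L : ℕ → ℝ) (hLmono : Antitone L)
    (hstep : ∀ k, s k / 2 * ‖a k - ainf‖ ^ 2 + D ≥
      L (k + 1) + s (k + 1) / 2 * ‖a (k + 1) - ainf‖ ^ 2) :
    ∀ K : ℕ, 1 ≤ K → L K ≤ D + s 0 / (2 * K) * ‖a 0 - ainf‖ ^ 2 := by
  intro K hK
  set E : ℕ → ℝ := fun k => s k / 2 * ‖a k - ainf‖ ^ 2 with hE
  have hEnonneg : ∀ k, 0 ≤ E k := fun k => by
    exact mul_nonneg (le_of_lt (by linarith [hspos k])) (by positivity)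
  have hsum : ∀ M : ℕ, ∑ k ∈ Finset.range M, L (k + 1) ≤ M * D + E 0 - E M := by
    intro M
    induction M with
    | zero => simp
    | succ m ih =>
      rw [Finset.sum_range_succ]
      have h := hstep m
      push_cast
      have : L (m + 1) ≤ D + E m - E (m + 1) := by
        simp only [hE]; linarith [h]
      linarith
  have hKL : (K : ℝ) * L K ≤ ∑ k ∈ Finset.range K, L (k + 1) := by
    have : ∀ k ∈ Finset.range K, L K ≤ L (k + 1) := by
      intro k hk
      exact hLmono (Finset.mem_range.mp hk)
    calc (K : ℝ) * L K = ∑ _k ∈ Finset.range K, L K := by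
          rw [Finset.sum_const, Finset.card_range, nsmul_eq_mul]
      _ ≤ _ := Finset.sum_le_sum this
  have hKpos : (0 : ℝ) < K := by exact_mod_cast hK
  have h1 : (K : ℝ) * L K ≤ K * D + E 0 := by
    have := hsum K
    linarith [hEnonneg K]
  have h2 : L K ≤ D + E 0 / K := by
    have hx : E 0 / K * K = E 0 := div_mul_cancel₀ _ (ne_of_gt hKpos)
    nlinarith
  calc L K ≤ D + E 0 / K := h2
    _ = D + s 0 / (2 * K) * ‖a 0 - ainf‖ ^ 2 := by
        simp only [hE]; field_simp
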